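/- Let G be any connected graph on n≥3 vertices. Then there exists an n×n positive definite matrix A with all entries nonzero, such that |a_{ii}| < Σ_{j≠i}|a_{ij}| for every row i (A is not diagonally dominant in any row), the thresholded matrix A_G is positive definite, and A_G is not diagonally dominant. -/

import Mathlib

def threshold {n : ℕ} (G : SimpleGraph (Fin n)) [DecidableRel G.Adj]
    (A : Matrix (Fin n) (Fin n) ℝ) : Matrix (Fin n) (Fin n) ℝ :=
  Matrix.of fun i j => if i = j ∨ G.Adj i j then A i j else 0

section Aux

open Finset Matrix

/-- the base matrix: all-ones plus a diagonal -/
private def Bmat (n : ℕ) (D : Fin n → ℝ) : Matrix (Fin n) (Fin n) ℝ :=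
  Matrix.of fun j k => if j = k then 1 + D j else 1

private lemma Bmat_herm {n : ℕ} (D : Fin n → ℝ) : (Bmat n D).IsHermitian := by
  ext j k
  simp only [Bmat, conjTranspose_apply, of_apply, star_trivial]
  by_cases h : j = k
  · subst h; simp
  · simp [h, Ne.symm h]

private lemma Bmat_form {n : ℕ} (D : Fin n → ℝ) (x : Fin n → ℝ) :
    dotProduct x ((Bmat n D).mulVec x) = (∑ j, x j)^2 + ∑ j, D j * x j^2 := by
  simp only [dotProduct, Matrix.mulVec, Bmat, Matrix.of_apply]
  have h1 : ∀ j, (∑ k, (if j = k then 1 + D j else 1) * x k) = (∑ k, x k) + D j * x j := by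
    intro j
    have : ∀ k, (if j = k then 1 + D j else (1:ℝ)) * x k
        = x k + (if j = k then D j * x k else 0) := by
      intro k; split <;> ring
    simp only [this, Finset.sum_add_distrib, Finset.sum_ite_eq, mem_univ, if_pos]
  calc ∑ j, x j * (∑ k, (if j = k then 1 + D j else 1) * x k)
      = ∑ j, (x j * (∑ k, x k) + D j * x j ^2) := by
        refine Finset.sum_congr rfl fun j _ => ?_
        rw [h1 j]; ring
    _ = (∑ j, x j)^2 + ∑ j, D j * x j^2 := by
        rw [Finset.sum_add_distrib, ← Finset.sum_mul, sq]

private lemma Bmat_posdef {n : ℕ} (D : Fin n → ℝ) (hD : ∀ j, 0 < D j) :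
    (Bmat n D).PosDef := by
  refine posDef_iff_dotProduct_mulVec.2 ⟨Bmat_herm D, fun x hx => ?_⟩
  have hsx : star x = x := by simp
  rw [hsx]
  show 0 < dotProduct x ((Bmat n D).mulVec x)
  rw [Bmat_form]
  obtain ⟨j, hj⟩ := Function.ne_iff.mp hx
  have h1 : 0 < ∑ j, D j * x j^2 := by
    refine Finset.sum_pos' (fun i _ => mul_nonneg (hD i).le (sq_nonneg _)) ⟨j, mem_univ j, ?_⟩
    have : (0:ℝ) < x j ^ 2 := lt_of_le_of_ne (sq_nonneg _) (Ne.symm (pow_ne_zero 2 hj))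
    exact mul_pos (hD j) this
  nlinarith [sq_nonneg (∑ j, x j)]

private lemma Bmat_entries {n : ℕ} (D : Fin n → ℝ) (hD : ∀ j, 0 < D j) (i j : Fin n) :
    Bmat n D i j ≠ 0 := by
  simp only [Bmat, Matrix.of_apply]
  split
  · have := hD i; intro h; linarith
  · norm_num

private lemma Bmat_rows {n : ℕ} (hn : 3 ≤ n) (D : Fin n → ℝ) (hD : ∀ j, 0 < D j)
    (hD2 : ∀ j, D j < (n:ℝ) - 2) (i : Fin n) :
    |Bmat n D i i| < ∑ j ∈ univ.erase i, |Bmat n D i j| := by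
  have h1 : ∑ j ∈ univ.erase i, |Bmat n D i j| = (n:ℝ) - 1 := by
    rw [Finset.sum_congr rfl (fun j hj => ?_)]
    · rw [Finset.sum_const, Finset.card_erase_of_mem (mem_univ i), card_univ,
        Fintype.card_fin, nsmul_eq_mul, Nat.cast_sub (by omega), Nat.cast_one, mul_one]
    · have hji : ¬ (i = j) := fun h => (mem_erase.1 hj).1 h.symm
      show |Bmat n D i j| = 1
      simp [Bmat, hji]
  rw [h1]
  have h2 : Bmat n D i i = 1 + D i := by simp [Bmat]
  rw [h2, abs_of_pos (by linarith [hD i])]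
  linarith [hD2 i]

variable {n : ℕ} (G : SimpleGraph (Fin n)) [DecidableRel G.Adj]

private lemma exists_adj_of_conn (hn : 3 ≤ n) (hconn : G.Connected) (v : Fin n) :
    ∃ w, G.Adj v w := by
  have : Nontrivial (Fin n) := Fin.nontrivial_iff_two_le.2 (by omega)
  obtain ⟨w, hw⟩ := exists_ne v
  obtain ⟨p⟩ := hconn.preconnected v w
  cases p with
  | nil => exact absurd rfl (Ne.symm hw)
  | cons h _ => exact ⟨_, h⟩

private lemma exists_deg_two (hn : 3 ≤ n) (hconn : G.Connected) :
    ∃ v, 2 ≤ G.degree v := by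
  by_contra hc
  push_neg at hc
  have huniq : ∀ v p q, G.Adj v p → G.Adj v q → p = q := by
    intro v p q hp hq
    have hcard : (G.neighborFinset v).card ≤ 1 := by
      have := hc v; rw [← SimpleGraph.card_neighborFinset_eq_degree] at this; omega
    exact Finset.card_le_one.1 hcard p (by rwa [SimpleGraph.mem_neighborFinset])
      q (by rwa [SimpleGraph.mem_neighborFinset])
  obtain ⟨b, hab⟩ := exists_adj_of_conn G hn hconn ⟨0, by omega⟩
  set a : Fin n := ⟨0, by omega⟩ with ha
  have key : ∀ (x v : Fin n) (w : G.Walk x v), (x = a ∨ x = b) → (v = a ∨ v = b) := by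
    intro x v w
    induction w with
    | nil => exact fun h => h
    | @cons x y v h p ih =>
        rintro (h' | h')
        · exact ih (Or.inr (huniq a y b (h' ▸ h) hab))
        · exact ih (Or.inl (huniq b y a (h' ▸ h) hab.symm))
  have hbig : ((univ : Finset (Fin n)) \ {a, b}).Nonempty := by
    rw [← Finset.card_pos]
    have h1 : ({a, b} : Finset (Fin n)).card ≤ 2 := Finset.card_insert_le _ _ |>.trans (by simp)
    have h2 : (univ : Finset (Fin n)).card = n := by simp
    have := Finset.le_card_sdiff ({a,b} : Finset (Fin n)) univ
    omega
  obtain ⟨c, hc'⟩ := hbig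
  simp only [Finset.mem_sdiff, Finset.mem_insert, Finset.mem_singleton, not_or] at hc'
  obtain ⟨p⟩ := hconn.preconnected a c
  rcases key a c p (Or.inl rfl) with h | h
  · exact hc'.2.1 h
  · exact hc'.2.2 h

private lemma full_adj {v : Fin n} (hv : G.degree v = n - 1) : ∀ w, w ≠ v → G.Adj v w := by
  have hsub : G.neighborFinset v ⊆ univ.erase v := by
    intro w hw
    rw [SimpleGraph.mem_neighborFinset] at hw
    exact Finset.mem_erase.2 ⟨hw.ne', Finset.mem_univ w⟩
  have hcard : (univ.erase v).card ≤ (G.neighborFinset v).card := by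
    rw [Finset.card_erase_of_mem (mem_univ v), card_univ, Fintype.card_fin,
      SimpleGraph.card_neighborFinset_eq_degree, hv]
  have heq := Finset.eq_of_subset_of_card_le hsub hcard
  intro w hw
  have : w ∈ G.neighborFinset v := heq ▸ Finset.mem_erase.2 ⟨hw, Finset.mem_univ w⟩
  exact (SimpleGraph.mem_neighborFinset G v w).1 this

private lemma exists_S (hn : 3 ≤ n) (hconn : G.Connected) (w : Fin n)
    (hw : G.degree w ≠ n - 1) :
    ∃ (S : Finset (Fin n)) (i0 u : Fin n), i0 ∈ S ∧ u ∉ S ∧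
      (∀ v ∈ S, G.Adj u v) ∧ (∀ v ∈ S, 2 ≤ G.degree v) ∧
      (∀ v, G.degree v = n - 1 → v ∈ S) := by
  classical
  set F : Finset (Fin n) := univ.filter (fun v => G.degree v = n - 1) with hF
  by_cases hFne : F.Nonempty
  · obtain ⟨i0, hi0⟩ := hFne
    refine ⟨F, i0, w, hi0, ?_, ?_, ?_, ?_⟩
    · simp only [hF, mem_filter]; tauto
    · intro v hv
      rw [hF, mem_filter] at hv
      have hvw : w ≠ v := by rintro rfl; exact hw hv.2
      exact (full_adj G hv.2 w hvw).symm
    · intro v hv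
      rw [hF, mem_filter] at hv
      omega
    · intro v hv; rw [hF, mem_filter]; exact ⟨mem_univ v, hv⟩
  · obtain ⟨i0, hi0⟩ := exists_deg_two G hn hconn
    obtain ⟨u, hu⟩ := exists_adj_of_conn G hn hconn i0
    refine ⟨{i0}, i0, u, mem_singleton_self i0, ?_, ?_, ?_, ?_⟩
    · rw [mem_singleton]; exact fun h => G.irrefl (h ▸ hu)
    · intro v hv; rw [mem_singleton] at hv; subst hv; exact hu.symm
    · intro v hv; rw [mem_singleton] at hv; subst hv; exact hi0
    · intro v hv
      exact absurd ⟨v, by rw [hF, mem_filter]; exact ⟨mem_univ v, hv⟩⟩ hFne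

private lemma thr_entry (D : Fin n → ℝ) (j k : Fin n) :
    threshold G (Bmat n D) j k
      = (if j = k then 1 + D j else 0) + (if G.Adj j k then 1 else 0) := by
  simp only [threshold, Bmat, Matrix.of_apply]
  rcases eq_or_ne j k with rfl | hne
  · simp [G.irrefl]
  · simp [hne]

private lemma thr_herm (D : Fin n → ℝ) : (threshold G (Bmat n D)).IsHermitian := by
  ext j k
  simp only [conjTranspose_apply, star_trivial, thr_entry]
  rcases eq_or_ne j k with rfl | hne
  · rfl
  · simp [hne, hne.symm, G.adj_comm j k]

private lemma thr_form (D : Fin n → ℝ) (x : Fin n → ℝ) :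
    dotProduct x ((threshold G (Bmat n D)).mulVec x)
      = ∑ j, (1 + D j) * x j^2
        + ∑ j, ∑ k, (if G.Adj j k then x j * x k else 0) := by
  simp only [dotProduct, Matrix.mulVec, thr_entry]
  have h1 : ∀ j, (∑ k, ((if j = k then 1 + D j else 0) + (if G.Adj j k then 1 else 0)) * x k)
      = (1 + D j) * x j + ∑ k, (if G.Adj j k then x k else 0) := by
    intro j
    have : ∀ k, ((if j = k then 1 + D j else 0) + (if G.Adj j k then (1:ℝ) else 0)) * x k
        = (if j = k then (1 + D j) * x k else 0) + (if G.Adj j k then x k else 0) := by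
      intro k; split <;> split <;> ring
    simp only [this, Finset.sum_add_distrib, Finset.sum_ite_eq, mem_univ, if_pos]
  calc ∑ j, x j * (∑ k, ((if j = k then 1 + D j else 0) + (if G.Adj j k then 1 else 0)) * x k)
      = ∑ j, ((1 + D j) * x j ^ 2 + ∑ k, (if G.Adj j k then x j * x k else 0)) := by
        refine Finset.sum_congr rfl fun j _ => ?_
        rw [h1 j, mul_add, Finset.mul_sum]
        congr 1
        · ring
        · exact Finset.sum_congr rfl fun k _ => by split <;> ring
    _ = _ := Finset.sum_add_distrib

private lemma deg_sum (j : Fin n) :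
    ((G.degree j : ℝ)) = ∑ k, if G.Adj j k then (1:ℝ) else 0 := by
  rw [Finset.sum_boole]
  congr 1
  rw [← SimpleGraph.neighborFinset_eq_filter, SimpleGraph.card_neighborFinset_eq_degree]

private lemma double_sum_sq (x : Fin n → ℝ) :
    ∑ j, ∑ k, (if G.Adj j k then (x j + x k)^2 else 0)
      = 2 * ∑ j, (G.degree j : ℝ) * x j^2
        + 2 * ∑ j, ∑ k, (if G.Adj j k then x j * x k else 0) := by
  have hpt : ∀ j k, (if G.Adj j k then (x j + x k)^2 else (0:ℝ))
      = (if G.Adj j k then x j^2 else 0) + (if G.Adj j k then x k^2 else 0)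
        + 2 * (if G.Adj j k then x j * x k else 0) := by
    intro j k; split <;> ring
  have hswap : ∑ j, ∑ k, (if G.Adj j k then x k^2 else (0:ℝ))
      = ∑ j, ∑ k, (if G.Adj j k then x j^2 else 0) := by
    rw [Finset.sum_comm]
    refine Finset.sum_congr rfl fun j _ => Finset.sum_congr rfl fun k _ => ?_
    exact if_congr (G.adj_comm j k).symm rfl rfl
  have hdeg : ∀ j, ∑ k, (if G.Adj j k then x j^2 else (0:ℝ))
      = (G.degree j : ℝ) * x j^2 := by
    intro j
    rw [deg_sum, Finset.sum_mul]
    exact Finset.sum_congr rfl fun k _ => by split <;> ring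
  simp only [hpt, Finset.sum_add_distrib, ← Finset.mul_sum, hswap]
  simp only [Finset.sum_congr rfl (fun j _ => hdeg j)]
  ring

private lemma lower_bd (x : Fin n → ℝ) (S : Finset (Fin n)) (u : Fin n) (hu : u ∉ S)
    (hadj : ∀ v ∈ S, G.Adj u v) :
    2 * ∑ v ∈ S, (x u + x v)^2
      ≤ ∑ j, ∑ k, (if G.Adj j k then (x j + x k)^2 else 0) := by
  set g : Fin n → ℝ := fun j => ∑ k, (if G.Adj j k then (x j + x k)^2 else 0) with hg
  have hgnn : ∀ j, 0 ≤ g j := fun j =>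
    Finset.sum_nonneg fun k _ => by split; exacts [sq_nonneg _, le_refl 0]
  have h1 : ∑ j ∈ insert u S, g j ≤ ∑ j, g j :=
    Finset.sum_le_sum_of_subset_of_nonneg (Finset.subset_univ _) fun j _ _ => hgnn j
  rw [Finset.sum_insert hu] at h1
  have h2 : ∑ v ∈ S, (x u + x v)^2 ≤ g u := by
    calc ∑ v ∈ S, (x u + x v)^2
        = ∑ v ∈ S, (if G.Adj u v then (x u + x v)^2 else 0) :=
          Finset.sum_congr rfl fun v hv => (if_pos (hadj v hv)).symm
      _ ≤ g u := Finset.sum_le_sum_of_subset_of_nonneg (Finset.subset_univ _)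
          (fun k _ _ => by split; exacts [sq_nonneg _, le_refl 0])
  have h3 : ∀ v ∈ S, (x u + x v)^2 ≤ g v := by
    intro v hv
    have hterm : (if G.Adj v u then (x v + x u)^2 else 0) = (x u + x v)^2 := by
      rw [if_pos (hadj v hv).symm]; ring
    calc (x u + x v)^2 = (if G.Adj v u then (x v + x u)^2 else 0) := hterm.symm
      _ ≤ g v := Finset.single_le_sum
          (f := fun k => if G.Adj v k then (x v + x k)^2 else 0)
          (fun k _ => by split; exacts [sq_nonneg _, le_refl 0]) (mem_univ u)
  have h4 : ∑ v ∈ S, (x u + x v)^2 ≤ ∑ v ∈ S, g v := Finset.sum_le_sum h3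
  linarith

private lemma scalar_ineq (N s t b Q η : ℝ) (hN : 3 ≤ N) (hs1 : 1 ≤ s) (hsN : s ≤ N)
    (hQ : 0 ≤ Q) (hb : b^2 ≤ s * Q) (hη : η = 1/(10*N)) :
    η * (t^2 + Q) ≤ (1/2) * t^2 - η * Q + (s * t^2 + 2 * t * b + Q) := by
  have hη30 : η ≤ 1/30 := by
    rw [hη, div_le_div_iff₀ (by linarith) (by norm_num)]; linarith
  have hηN : η * N = 1/10 := by rw [hη]; field_simp
  have hη0 : 0 < η := by rw [hη]; positivity
  have hkey : s ≤ (s + 1/2 - η) * (1 - 2*η) := by nlinarith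
  have hpos : 0 < s + 1/2 - η := by linarith
  nlinarith [sq_nonneg ((s + 1/2 - η) * t + b), mul_le_mul_of_nonneg_right hkey hQ,
    mul_pos hpos hpos]

private lemma thr_posdef (hn : 3 ≤ n) (S : Finset (Fin n)) (u : Fin n) (hu : u ∉ S)
    (hadj : ∀ v ∈ S, G.Adj u v) (hS1 : S.Nonempty) (D : Fin n → ℝ)
    (hDdef : ∀ j, D j = (G.degree j : ℝ) - 1
      + (if j ∈ S then -(1/(10*(n:ℝ))) else 1/2)) :
    (threshold G (Bmat n D)).PosDef := by
  classical
  set η : ℝ := 1/(10*(n:ℝ)) with hη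
  set c : Fin n → ℝ := fun j => if j ∈ S then -η else 1/2 with hc
  refine posDef_iff_dotProduct_mulVec.2 ⟨thr_herm G D, fun x hx => ?_⟩
  have hsx : star x = x := by simp
  rw [hsx]
  show 0 < dotProduct x ((threshold G (Bmat n D)).mulVec x)
  rw [thr_form]
  have hN : (3:ℝ) ≤ (n:ℝ) := by exact_mod_cast hn
  have hsplit : ∑ j, (1 + D j) * x j^2
      = ∑ j, c j * x j^2 + ∑ j, (G.degree j : ℝ) * x j^2 := by
    rw [← Finset.sum_add_distrib]
    refine Finset.sum_congr rfl fun j _ => ?_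
    rw [hDdef j]; simp only [hc]; ring
  rw [hsplit]
  have hds := double_sum_sq G x
  have hlb := lower_bd G x S u hu hadj
  set T : ℝ := ∑ j, ∑ k, (if G.Adj j k then x j * x k else 0) with hT
  set DS : ℝ := ∑ j, ∑ k, (if G.Adj j k then (x j + x k)^2 else 0) with hDS
  have hform : ∑ j, c j * x j^2 + ∑ j, (G.degree j : ℝ) * x j^2 + T
      = ∑ j, c j * x j^2 + (1/2) * DS := by rw [hds]; ring
  rw [hform]
  have hcs : ∑ j, c j * x j^2
      = ∑ j ∈ S, (-η) * x j^2 + ∑ j ∈ Sᶜ, (1/2) * x j^2 := by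
    rw [← Finset.sum_add_sum_compl S (fun j => c j * x j^2)]
    congr 1
    · exact Finset.sum_congr rfl fun j hj => by simp only [hc, if_pos hj]
    · exact Finset.sum_congr rfl fun j hj => by
        simp only [hc, if_neg (Finset.mem_compl.1 hj)]
  have huc : u ∈ Sᶜ := Finset.mem_compl.2 hu
  have hSc : ∑ j ∈ Sᶜ, (1/2) * x j^2
      = ∑ j ∈ Sᶜ.erase u, (1/2) * x j^2 + (1/2) * x u^2 :=
    (Finset.sum_erase_add _ _ huc).symm
  set Q : ℝ := ∑ v ∈ S, x v^2 with hQdef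
  set b : ℝ := ∑ v ∈ S, x v with hbdef
  set s : ℝ := (S.card : ℝ) with hsdef
  have hexp : ∑ v ∈ S, (x u + x v)^2 = s * x u^2 + 2 * x u * b + Q := by
    have h : ∀ v ∈ S, (x u + x v)^2 = x u^2 + 2 * x u * x v + x v^2 := fun v _ => by ring
    rw [Finset.sum_congr rfl h, Finset.sum_add_distrib, Finset.sum_add_distrib,
      Finset.sum_const, nsmul_eq_mul, ← Finset.mul_sum]
  have hb2 : b^2 ≤ s * Q := by
    simpa [hbdef, hQdef, hsdef] using sq_sum_le_card_mul_sum_sq (s := S) (f := x)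
  have hs1 : 1 ≤ s := by
    have := Finset.card_pos.2 hS1
    simp only [hsdef]; exact_mod_cast this
  have hsN : s ≤ (n:ℝ) := by
    have := Finset.card_le_univ S
    simp only [hsdef]
    calc (S.card : ℝ) ≤ ((univ : Finset (Fin n)).card : ℝ) := by exact_mod_cast this
      _ = n := by simp
  have hQ0 : 0 ≤ Q := Finset.sum_nonneg fun v _ => sq_nonneg _
  have hscalar := scalar_ineq (n:ℝ) s (x u) b Q η hN hs1 hsN hQ0 hb2 hη
  have hη0 : 0 < η := by rw [hη]; positivity
  have hR0 : 0 ≤ ∑ j ∈ Sᶜ.erase u, (1/2) * x j^2 :=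
    Finset.sum_nonneg fun j _ => by positivity
  have hmain : η * (x u^2 + Q) + ∑ j ∈ Sᶜ.erase u, (1/2) * x j^2
      ≤ ∑ j, c j * x j^2 + (1/2) * DS := by
    rw [hcs, hSc]
    have h1 : ∑ v ∈ S, (-η) * x v^2 = -η * Q := by
      rw [← Finset.mul_sum, hQdef]
    have h2 : ∑ v ∈ S, (x u + x v)^2 ≤ (1/2) * DS := by linarith [hlb]
    linarith [hexp, hscalar, h2, h1]
  obtain ⟨j0, hj0⟩ := Function.ne_iff.mp hx
  have hj0sq : 0 < x j0 ^2 := lt_of_le_of_ne (sq_nonneg _) (Ne.symm (pow_ne_zero 2 hj0))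
  have hpos : 0 < η * (x u^2 + Q) + ∑ j ∈ Sᶜ.erase u, (1/2) * x j^2 := by
    by_cases h1 : j0 ∈ S
    · have hle : x j0^2 ≤ Q := Finset.single_le_sum (fun v _ => sq_nonneg (x v)) h1
      have : 0 < η * (x u^2 + Q) :=
        mul_pos hη0 (add_pos_of_nonneg_of_pos (sq_nonneg (x u)) (lt_of_lt_of_le hj0sq hle))
      linarith
    · by_cases h2 : j0 = u
      · have hxu : 0 < x u ^ 2 := h2 ▸ hj0sq
        have : 0 < η * (x u^2 + Q) := mul_pos hη0 (add_pos_of_pos_of_nonneg hxu hQ0)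
        linarith
      · have hmem : j0 ∈ Sᶜ.erase u := Finset.mem_erase.2 ⟨h2, Finset.mem_compl.2 h1⟩
        have hle : (1/2) * x j0^2 ≤ ∑ j ∈ Sᶜ.erase u, (1/2) * x j^2 :=
          Finset.single_le_sum (f := fun j => (1/2) * x j^2)
            (fun v _ => by positivity) hmem
        have h3 : 0 ≤ η * (x u^2 + Q) := by positivity
        linarith
  linarith

private lemma thr_rowsum (D : Fin n → ℝ) (i : Fin n) :
    ∑ j ∈ univ.erase i, |threshold G (Bmat n D) i j| = (G.degree i : ℝ) := by
  have h1 : ∀ j ∈ univ.erase i, |threshold G (Bmat n D) i j|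
      = if G.Adj i j then (1:ℝ) else 0 := by
    intro j hj
    have hij : ¬ (i = j) := fun h => (mem_erase.1 hj).1 h.symm
    rw [thr_entry, if_neg hij, zero_add]
    split <;> norm_num
  rw [Finset.sum_congr rfl h1, Finset.sum_erase _ (by simp [G.irrefl]), ← deg_sum]

end Aux

open Finset in
/-- For any connected graph `G` on `n ≥ 3` vertices, there is a positive definite
matrix `A` with no zero entries that fails diagonal dominance in every row, such that
`A_G` is positive definite and `A_G` is not diagonally dominant. -/
theorem stmt_17 {n : ℕ} (hn : 3 ≤ n) (G : SimpleGraph (Fin n)) [DecidableRel G.Adj]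
    (hconn : G.Connected) :
    ∃ A : Matrix (Fin n) (Fin n) ℝ, A.PosDef ∧
      (∀ i j : Fin n, A i j ≠ 0) ∧
      (∀ i : Fin n, |A i i| < ∑ j ∈ univ.erase i, |A i j|) ∧
      (threshold G A).PosDef ∧
      ¬ (∀ i : Fin n, ∑ j ∈ univ.erase i, |threshold G A i j| ≤ |threshold G A i i|) := by
  classical
  have hN : (3:ℝ) ≤ (n:ℝ) := by exact_mod_cast hn
  by_cases hfull : ∀ v, G.degree v = n - 1
  · -- complete graph case
    have hadj : ∀ j k : Fin n, j ≠ k → G.Adj j k := fun j k h =>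
      full_adj G (hfull j) k (Ne.symm h)
    set D : Fin n → ℝ := fun _ => ((n:ℝ) - 2)/2 with hDdef
    have hD : ∀ j, 0 < D j := fun j => by simp only [hDdef]; linarith
    have hD2 : ∀ j, D j < (n:ℝ) - 2 := fun j => by simp only [hDdef]; linarith
    have hthr : threshold G (Bmat n D) = Bmat n D := by
      ext j k
      show (if j = k ∨ G.Adj j k then Bmat n D j k else 0) = Bmat n D j k
      by_cases h : j = k
      · rw [if_pos (Or.inl h)]
      · rw [if_pos (Or.inr (hadj j k h))]
    refine ⟨Bmat n D, Bmat_posdef D hD, Bmat_entries D hD, Bmat_rows hn D hD hD2, ?_, ?_⟩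
    · rw [hthr]; exact Bmat_posdef D hD
    · intro hDD
      have h := hDD ⟨0, by omega⟩
      rw [hthr] at h
      exact absurd h (not_le.2 (Bmat_rows hn D hD hD2 ⟨0, by omega⟩))
  · -- non-complete case
    push_neg at hfull
    obtain ⟨w, hw⟩ := hfull
    obtain ⟨S, i0, u, hi0S, huS, hadjS, hdeg2, hfullS⟩ := exists_S G hn hconn w hw
    set η : ℝ := 1/(10*(n:ℝ)) with hη
    have hη0 : 0 < η := by rw [hη]; positivity
    have hη30 : η ≤ 1/30 := by
      rw [hη, div_le_div_iff₀ (by linarith) (by norm_num)]; linarith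
    set D : Fin n → ℝ := fun j => (G.degree j : ℝ) - 1
      + (if j ∈ S then -η else 1/2) with hDdef
    have hdegpos : ∀ j, 1 ≤ G.degree j := fun j =>
      (SimpleGraph.degree_pos_iff_exists_adj G j).2 (exists_adj_of_conn G hn hconn j)
    have hdegle : ∀ j, G.degree j ≤ n - 1 := fun j => by
      have := G.degree_lt_card_verts j
      rw [Fintype.card_fin] at this; omega
    have hD : ∀ j, 0 < D j := by
      intro j
      simp only [hDdef]
      by_cases h : j ∈ S
      · rw [if_pos h]
        have : (2:ℝ) ≤ (G.degree j : ℝ) := by exact_mod_cast hdeg2 j h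
        linarith
      · rw [if_neg h]
        have : (1:ℝ) ≤ (G.degree j : ℝ) := by exact_mod_cast hdegpos j
        linarith
    have hD2 : ∀ j, D j < (n:ℝ) - 2 := by
      intro j
      simp only [hDdef]
      by_cases h : j ∈ S
      · rw [if_pos h]
        have : (G.degree j : ℝ) ≤ (n:ℝ) - 1 := by
          have := hdegle j
          have h2 : (G.degree j : ℝ) ≤ ((n - 1 : ℕ) : ℝ) := by exact_mod_cast this
          rwa [Nat.cast_sub (by omega), Nat.cast_one] at h2
        linarith
      · rw [if_neg h]
        have hne : G.degree j ≠ n - 1 := fun hc => h (hfullS j hc)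
        have hle : G.degree j ≤ n - 2 := by have := hdegle j; omega
        have : (G.degree j : ℝ) ≤ (n:ℝ) - 2 := by
          have h2 : (G.degree j : ℝ) ≤ ((n - 2 : ℕ) : ℝ) := by exact_mod_cast hle
          rwa [Nat.cast_sub (by omega), Nat.cast_ofNat] at h2
        linarith
    refine ⟨Bmat n D, Bmat_posdef D hD, Bmat_entries D hD, Bmat_rows hn D hD hD2, ?_, ?_⟩
    · exact thr_posdef G hn S u huS hadjS ⟨i0, hi0S⟩ D (fun j => by rw [hDdef])
    · intro hDD
      have h := hDD i0
      rw [thr_rowsum G D i0] at h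
      have hdiag : threshold G (Bmat n D) i0 i0 = 1 + D i0 := by
        rw [thr_entry, if_pos rfl, if_neg (G.irrefl), add_zero]
      rw [hdiag, abs_of_pos (by linarith [hD i0])] at h
      have hDi0 : D i0 = (G.degree i0 : ℝ) - 1 - η := by
        simp only [hDdef]; rw [if_pos hi0S]; ring
      rw [hDi0] at h
      linarith
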